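/- Let n ≥ 3, let k be a unit modulo n of multiplicative order α ≥ 2, and let i : α−1 ≥ i₁ > i₂ > ⋯ > i_r ≥ 0 be a sequence. Then wt(n,k;i) = wt(n,k;I(i)), where I(i) is the dual sequence of i. -/

import Mathlib

/-- The set `Ω(i, λ) = { b₁k^{i₁} + ⋯ + b_r k^{i_r} mod n : |b_j| ≤ λ_j }` in `ℤ/nℤ`. -/
def OmegaSet (n : ℕ) (k : (ZMod n)ˣ) {r : ℕ} (i : Fin r → ℕ) (lam : Fin r → ℕ) :
    Set (ZMod n) :=
  { x | ∃ b : Fin r → ℤ, (∀ j, |b j| ≤ (lam j : ℤ)) ∧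
      x = ∑ j, (b j : ZMod n) * ((k ^ i j : (ZMod n)ˣ) : ZMod n) }

/-- A `sequence`: a strictly decreasing tuple `α−1 ≥ i₁ > i₂ > ⋯ > i_r ≥ 0`. -/
def IsSeq (α : ℕ) {r : ℕ} (i : Fin r → ℕ) : Prop :=
  (∀ j, i j ≤ α - 1) ∧ StrictAnti i

/-- `wt(n, k; i)`: the minimal total weight `λ₁ + ⋯ + λ_r` over tuples `λ`
with `Ω(i,λ) = ℤ/nℤ`. -/
noncomputable def wtSeq (n : ℕ) (k : (ZMod n)ˣ) {r : ℕ} (i : Fin r → ℕ) : ℕ :=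
  sInf { s | ∃ lam : Fin r → ℕ, OmegaSet n k i lam = Set.univ ∧ ∑ j, lam j = s }

/-- The maximal sequence `Δ : α−1 > α−2 > ⋯ > 1 > 0`. -/
def DeltaSeq (α : ℕ) : Fin α → ℕ := fun j => α - 1 - (j : ℕ)

/-- `wt(n, k; α) := wt(n, k; Δ)`. -/
noncomputable def wtAlpha (n : ℕ) (k : (ZMod n)ˣ) (α : ℕ) : ℕ :=
  wtSeq n k (DeltaSeq α)

/-- The dual sequence `I(i) : α−(i₁−i₂) > α−(i₁−i₃) > ⋯ > α−(i₁−i_r) > 0`. -/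
def dualSeq (α : ℕ) {r : ℕ} (i : Fin r → ℕ) : Fin r → ℕ :=
  fun t =>
    if h : (t : ℕ) + 1 < r then
      α - (i ⟨0, Nat.lt_of_le_of_lt (Nat.zero_le _) h⟩ - i ⟨(t : ℕ) + 1, h⟩)
    else 0

/-- The cyclic shift `λ′ : λ₂, λ₃, …, λ_r, λ₁` of a tuple `λ : λ₁, …, λ_r`. -/
def cycShift {r : ℕ} {β : Type*} (lam : Fin r → β) : Fin r → β :=
  fun t =>
    if h : (t : ℕ) + 1 < r then lam ⟨(t : ℕ) + 1, h⟩
    else lam ⟨0, Nat.lt_of_le_of_lt (Nat.zero_le _) t.isLt⟩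

lemma cycShift_eq_comp {r : ℕ} {β : Type*} (lam : Fin r → β) :
    cycShift lam = lam ∘ finRotate r := by
  cases r with
  | zero => funext t; exact absurd t.isLt (by omega)
  | succ m =>
    funext t
    simp only [cycShift, Function.comp, finRotate_succ_apply]
    by_cases h : (t : ℕ) + 1 < m + 1
    · rw [dif_pos h]
      congr 1
      have : t ≠ Fin.last m := by
        intro hh; rw [hh] at h; simp at h
      ext
      rw [Fin.val_add_one, if_neg this]
    · rw [dif_neg h]
      have : t = Fin.last m := by
        ext; have := t.isLt; simp [Fin.last]; omega
      congr 1
      ext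
      rw [Fin.val_add_one, if_pos this]

lemma pow_dual (n : ℕ) (k : (ZMod n)ˣ) (α : ℕ) (hα : orderOf k = α) {r : ℕ}
    (hr : 0 < r) (i : Fin r → ℕ) (hi : IsSeq α i) (hα2 : 2 ≤ α) (t : Fin r) :
    k ^ (dualSeq α i t) = k ^ (i (finRotate r t)) * k ^ (α - i ⟨0, hr⟩) := by
  obtain ⟨h1, h2⟩ := hi
  have hi0 : i ⟨0, hr⟩ ≤ α - 1 := h1 _
  cases r with
  | zero => omega
  | succ m =>
    by_cases h : (t : ℕ) + 1 < m + 1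
    · have hrot : finRotate (m+1) t = ⟨(t : ℕ)+1, h⟩ := by
        rw [finRotate_succ_apply]
        have ht : t ≠ Fin.last m := by
          intro hh; rw [hh] at h; simp at h
        ext
        rw [Fin.val_add_one, if_neg ht]
      have hle : i ⟨(t : ℕ)+1, h⟩ ≤ i ⟨0, hr⟩ :=
        h2.antitone (by simp [Fin.le_def])
      rw [dualSeq]
      rw [dif_pos h, hrot, ← pow_add]
      congr 1
      omega
    · have hrot : finRotate (m+1) t = ⟨0, hr⟩ := by
        rw [finRotate_succ_apply]
        have ht : t = Fin.last m := by
          ext; have := t.isLt; simp [Fin.last]; omega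
        ext
        rw [Fin.val_add_one, if_pos ht]
      rw [dualSeq]
      rw [dif_neg h, hrot, pow_zero, ← pow_add]
      have hiα : i ⟨0, hr⟩ + (α - i ⟨0, hr⟩) = α := by omega
      rw [hiα, ← hα, pow_orderOf_eq_one]

lemma sum_dual (n : ℕ) (k : (ZMod n)ˣ) (α : ℕ) (hα : orderOf k = α) {r : ℕ}
    (hr : 0 < r) (i : Fin r → ℕ) (hi : IsSeq α i) (hα2 : 2 ≤ α) (b : Fin r → ℤ) :
    ∑ t, ((cycShift b) t : ZMod n) * ((k ^ dualSeq α i t : (ZMod n)ˣ) : ZMod n) =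
      ((k ^ (α - i ⟨0, hr⟩) : (ZMod n)ˣ) : ZMod n) *
        ∑ j, (b j : ZMod n) * ((k ^ i j : (ZMod n)ˣ) : ZMod n) := by
  rw [cycShift_eq_comp, Finset.mul_sum]
  rw [← Equiv.sum_comp (finRotate r)
    (fun j => ((k ^ (α - i ⟨0, hr⟩) : (ZMod n)ˣ) : ZMod n) *
      ((b j : ZMod n) * ((k ^ i j : (ZMod n)ˣ) : ZMod n)))]
  refine Finset.sum_congr rfl fun t _ => ?_
  rw [pow_dual n k α hα hr i hi hα2 t]
  simp only [Function.comp_apply]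
  push_cast
  ring

lemma mem_dual_iff (n : ℕ) (k : (ZMod n)ˣ) (α : ℕ) (hα : orderOf k = α) {r : ℕ}
    (hr : 0 < r) (i : Fin r → ℕ) (hi : IsSeq α i) (hα2 : 2 ≤ α)
    (lam : Fin r → ℕ) (x : ZMod n) :
    x ∈ OmegaSet n k i lam ↔
      ((k ^ (α - i ⟨0, hr⟩) : (ZMod n)ˣ) : ZMod n) * x ∈
        OmegaSet n k (dualSeq α i) (cycShift lam) := by
  constructor
  · rintro ⟨b, hb, rfl⟩
    refine ⟨cycShift b, ?_, ?_⟩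
    · intro t
      rw [cycShift_eq_comp, cycShift_eq_comp]
      exact hb _
    · rw [sum_dual n k α hα hr i hi hα2 b]
  · rintro ⟨c, hc, hcx⟩
    set b : Fin r → ℤ := c ∘ (finRotate r).symm with hbdef
    have hcb : cycShift b = c := by
      rw [cycShift_eq_comp]
      funext t
      simp only [hbdef, Function.comp_apply, Equiv.symm_apply_apply]
    refine ⟨b, ?_, ?_⟩
    · intro j
      have := hc ((finRotate r).symm j)
      rw [cycShift_eq_comp] at this
      simpa only [hbdef, Function.comp_apply, Equiv.apply_symm_apply] using this
    · have := hcx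
      rw [← hcb, sum_dual n k α hα hr i hi hα2 b] at this
      exact (Units.mul_right_inj _).mp this

theorem wtSeq_dualSeq_eq (n : ℕ) (hn : 3 ≤ n) (k : (ZMod n)ˣ) (α : ℕ)
    (hα : orderOf k = α) (hα2 : 2 ≤ α) (r : ℕ) (hr : 0 < r)
    (i : Fin r → ℕ) (hi : IsSeq α i) :
    wtSeq n k i = wtSeq n k (dualSeq α i) := by
  unfold wtSeq
  congr 1
  ext s
  constructor
  · rintro ⟨lam, hΩ, rfl⟩
    refine ⟨cycShift lam, ?_, ?_⟩
    · rw [Set.eq_univ_iff_forall]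
      intro y
      have hx : (((k ^ (α - i ⟨0, hr⟩))⁻¹ : (ZMod n)ˣ) : ZMod n) * y ∈
          OmegaSet n k i lam := by rw [hΩ]; trivial
      have := (mem_dual_iff n k α hα hr i hi hα2 lam _).mp hx
      rwa [← mul_assoc, Units.mul_inv, one_mul] at this
    · rw [cycShift_eq_comp]
      exact Equiv.sum_comp (finRotate r) (fun j => (lam j : ℕ))
  · rintro ⟨mu, hΩ, rfl⟩
    refine ⟨mu ∘ (finRotate r).symm, ?_, ?_⟩
    · have hcb : cycShift (mu ∘ (finRotate r).symm) = mu := by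
        rw [cycShift_eq_comp]; funext t; simp only [Function.comp_apply, Equiv.symm_apply_apply]
      rw [Set.eq_univ_iff_forall]
      intro x
      rw [mem_dual_iff n k α hα hr i hi hα2 _ x, hcb, hΩ]
      trivial
    · exact Equiv.sum_comp (finRotate r).symm (fun j => (mu j : ℕ))
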